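/- arXiv:2305.08167 — 2 statements merged into one kernel-verified Lean document; each statement's English description precedes it below -/
import Mathlib

section
/- Let F be a field and let U(t) = Σ_{k=0}^N U_k t^k be an n×n paraunitary matrix polynomial over F with matrix coefficients U_k ∈ F^{n×n}. Let W be the n(N+1)×n(N+1) block circulant matrix whose (a,b)-th n×n block (for block indices a, b ∈ {0,1,…,N}) is U_{(b−a) mod (N+1)}; in particular its first block row is (U_0, U_1, …, U_N). Then W is orthogonal: W·Wᵀ = I_{n(N+1)}. -/
open LaurentPolynomial Matrix Finset

/-- A Laurent polynomial has only nonnegative powers of `t`: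
its coefficients of `t^(-k)` vanish for all `k ≥ 1`. -/
def OnlyNonnegPowers {F : Type*} [Field F] (p : F[T;T⁻¹]) : Prop :=
  ∀ m : ℤ, m < 0 → p.coeff m = 0

/-- The Laurent polynomial `ζ(t) = ∑_{k=1}^N g k * t^(-k)`. -/
noncomputable def zetaPoly {F : Type*} [Field F] (N : ℕ) (g : ℕ → F) : F[T;T⁻¹] :=
  ∑ k ∈ Finset.Icc 1 N, LaurentPolynomial.C (g k) * LaurentPolynomial.T (-(k : ℤ))

/-- The `n × n` matrix `G(t)`: the identity matrix except that its last row is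
`(ζ_1(t), …, ζ_{n-1}(t), 1)`, where `ζ_i(t) = ∑_{k=1}^N γ_{i k} t^(-k)`
(rows and columns are 0-based, so row `n-1` is the last one and its `j`-th
entry, `j < n-1`, is `ζ_{j+1}`). -/
noncomputable def Gmat {F : Type*} [Field F] (n N : ℕ) (γ : ℕ → ℕ → F) :
    Matrix (Fin n) (Fin n) F[T;T⁻¹] :=
  fun i j =>
    if i.val = n - 1 then (if j.val = n - 1 then 1 else zetaPoly N (γ (j.val + 1)))
    else (if i = j then 1 else 0)

/-- The diagonal matrix `diag(1, …, 1, t^(-N))`. -/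
noncomputable def diagTN (F : Type*) [Field F] (n N : ℕ) :
    Matrix (Fin n) (Fin n) F[T;T⁻¹] :=
  Matrix.diagonal (fun i => if i.val = n - 1 then LaurentPolynomial.T (-(N : ℤ)) else 1)

/-- The matrix polynomial `U(t) = ∑_{k=0}^N U_k t^k` as a matrix of Laurent polynomials. -/
noncomputable def matPoly {F : Type*} [Field F] (n N : ℕ)
    (U : Fin (N + 1) → Matrix (Fin n) (Fin n) F) :
    Matrix (Fin n) (Fin n) F[T;T⁻¹] :=
  fun i j => ∑ k : Fin (N + 1), LaurentPolynomial.C (U k i j) * LaurentPolynomial.T (k : ℤ)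

/-- For a matrix Laurent polynomial `P(t) = ∑_k C_k t^k`, its tilde
`P̃(t) = ∑_k C_kᵀ t^(-k)` (transpose entrywise composed with `t ↦ t⁻¹`). -/
noncomputable def tildeMat {F : Type*} [Field F] {n : ℕ}
    (P : Matrix (Fin n) (Fin n) F[T;T⁻¹]) : Matrix (Fin n) (Fin n) F[T;T⁻¹] :=
  fun i j => LaurentPolynomial.invert (P j i)

/-- A matrix Laurent polynomial `P` is paraunitary if `P(t) ⬝ P̃(t) = I`. -/
def Paraunitary {F : Type*} [Field F] {n : ℕ}
    (P : Matrix (Fin n) (Fin n) F[T;T⁻¹]) : Prop :=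
  P * tildeMat P = 1

/-- The `(N+1) × (N+1)` Hankel matrix `Γ` built from `g 1, …, g N`
(with the conventions `g 0 = 0` and `g k = 0` for `k > N`): in 0-based indices,
the `(a, b)` entry is `g (a + b)`. -/
def hankelMat {F : Type*} [Field F] (N : ℕ) (g : ℕ → F) :
    Matrix (Fin (N + 1)) (Fin (N + 1)) F :=
  fun a b => if 1 ≤ a.val + b.val ∧ a.val + b.val ≤ N then g (a.val + b.val) else 0

/-- `Δ = ∑_{i=1}^{n-1} Γ_i ^ 2 + I_{N+1}`. -/
def deltaMat {F : Type*} [Field F] (n N : ℕ) (γ : ℕ → ℕ → F) :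
    Matrix (Fin (N + 1)) (Fin (N + 1)) F :=
  (∑ i ∈ Finset.Icc 1 (n - 1), (hankelMat N (γ i)) ^ 2) + 1

lemma lp_sum_apply {F : Type*} [Field F] {α} (s : Finset α) (f : α → F[T;T⁻¹]) (m : ℤ) :
    (∑ x ∈ s, f x).coeff m = ∑ x ∈ s, (f x).coeff m := by
  rw [AddMonoidAlgebra.coeff_sum, Finsupp.finset_sum_apply]

lemma lp_single_apply {F : Type*} [Field F] (a : F) (k m : ℤ) :
    (AddMonoidAlgebra.single k a : F[T;T⁻¹]).coeff m = if k = m then a else 0 := by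
  rw [AddMonoidAlgebra.coeff_single, Finsupp.single_apply]

lemma para_coeff {F : Type*} [Field F] {n N : ℕ} {U : Fin (N + 1) → Matrix (Fin n) (Fin n) F}
    (hpu : Paraunitary (matPoly n N U)) (i j : Fin n) (m : ℤ) :
    (∑ k : Fin (N + 1), ∑ l : Fin n, ∑ k' : Fin (N + 1),
      if (k : ℤ) + -(k' : ℤ) = m then U k i l * U k' j l else 0)
    = if i = j ∧ m = 0 then 1 else 0 := by
  rw [Finset.sum_comm]
  have h := congrFun (congrFun hpu i) j
  rw [Matrix.mul_apply] at h
  simp only [matPoly, tildeMat, map_sum, _root_.map_mul, invert_C, invert_T] at h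
  simp only [← single_eq_C_mul_T, Finset.sum_mul_sum,
    AddMonoidAlgebra.single_mul_single] at h
  have h2 := congrArg (fun p : F[T;T⁻¹] => p.coeff m) h
  simp only [lp_sum_apply, lp_single_apply] at h2
  rw [h2]
  clear h h2 hpu
  rw [Matrix.one_apply, apply_ite (fun p : F[T;T⁻¹] => p.coeff m),
    ← single_zero_one_eq_one, lp_single_apply]
  have hz : (0 : F[T;T⁻¹]).coeff m = 0 := rfl
  rw [hz]
  by_cases hij : i = j <;> by_cases hm : m = 0 <;>
    simp [hij, hm, eq_comm]

lemma fin_sub_iff {N : ℕ} (k k' d : Fin (N + 1)) :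
    k' = k - d ↔ ((k : ℤ) + -(k' : ℤ) = (d : ℤ) ∨
      (k : ℤ) + -(k' : ℤ) = (d : ℤ) - (N + 1)) := by
  rw [eq_sub_iff_add_eq, Fin.ext_iff, Fin.add_def, Fin.val_mk]
  have h1 := k.isLt; have h2 := k'.isLt; have h3 := d.isLt
  rcases Nat.lt_or_ge (k'.val + d.val) (N + 1) with h | h
  · rw [Nat.mod_eq_of_lt h]; omega
  · rw [Nat.mod_eq_sub_mod h, Nat.mod_eq_of_lt (by omega)]; omega

theorem stmt6 (F : Type*) [Field F] (n N : ℕ)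
    (U : Fin (N + 1) → Matrix (Fin n) (Fin n) F)
    (hpu : Paraunitary (matPoly n N U))
    (W : Matrix (Fin (N + 1) × Fin n) (Fin (N + 1) × Fin n) F)
    (hW : ∀ a b : Fin (N + 1), ∀ i j : Fin n, W (a, i) (b, j) = U (b - a) i j) :
    W * Wᵀ = 1 := by
  ext ⟨a, i⟩ ⟨b, j⟩
  rw [Matrix.mul_apply, Matrix.one_apply, Fintype.sum_prod_type]
  simp only [Matrix.transpose_apply, hW]
  set d : Fin (N + 1) := b - a with hd
  have h1 : (∑ c : Fin (N + 1), ∑ l, U (c - a) i l * U (c - b) j l)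
      = ∑ k : Fin (N + 1), ∑ l, U k i l * U (k - d) j l := by
    rw [← _root_.Equiv.sum_comp (Equiv.addRight a) (fun c => ∑ l, U (c - a) i l * U (c - b) j l)]
    apply Finset.sum_congr rfl
    intro k _
    have e1 : k + a - a = k := by abel
    have e2 : k + a - b = k - d := by rw [hd]; abel
    simp only [Equiv.coe_addRight, e1, e2]
  rw [h1]
  have h2 : ∀ (k : Fin (N + 1)) (l : Fin n),
      U (k - d) j l = ∑ k' : Fin (N + 1), if k' = k - d then U k' j l else 0 := by
    intro k l
    rw [Finset.sum_ite_eq' Finset.univ (k - d) (fun k' => U k' j l),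
      if_pos (Finset.mem_univ _)]
  simp only [h2, Finset.mul_sum, mul_ite, mul_zero]
  have h3 : ∀ (k k' : Fin (N + 1)) (x : F), (if k' = k - d then x else 0)
      = (if (k : ℤ) + -(k' : ℤ) = (d : ℤ) then x else 0)
        + (if (k : ℤ) + -(k' : ℤ) = (d : ℤ) - (N + 1) then x else 0) := by
    intro k k' x
    have hiff := fin_sub_iff k k' d
    by_cases hA : (k : ℤ) + -(k' : ℤ) = (d : ℤ) <;>
      by_cases hB : (k : ℤ) + -(k' : ℤ) = (d : ℤ) - (N + 1)
    · omega
    · rw [if_pos (hiff.mpr (Or.inl hA)), if_pos hA, if_neg hB, add_zero]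
    · rw [if_pos (hiff.mpr (Or.inr hB)), if_neg hA, if_pos hB, zero_add]
    · rw [if_neg (fun hp => by rcases hiff.mp hp with h | h <;> [exact hA h; exact hB h]),
        if_neg hA, if_neg hB, add_zero]
  simp only [h3, Finset.sum_add_distrib]
  rw [para_coeff hpu i j (d : ℤ), para_coeff hpu i j ((d : ℤ) - (N + 1))]
  have hdlt : d.val < N + 1 := d.isLt
  rw [if_neg (by omega : ¬(i = j ∧ (d : ℤ) - (N + 1) = 0)), add_zero]
  have key : ((a, i) = ((b, j) : Fin (N + 1) × Fin n)) ↔ (i = j ∧ (d : ℤ) = 0) := by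
    rw [Prod.mk.injEq, hd]
    constructor
    · rintro ⟨rfl, rfl⟩; simp
    · rintro ⟨rfl, hz⟩
      have : b - a = 0 := by
        have : (b - a).val = 0 := by exact_mod_cast hz
        exact Fin.ext this
      exact ⟨(sub_eq_zero.mp this).symm, rfl⟩
  by_cases hc : (a, i) = ((b, j) : Fin (N + 1) × Fin n)
  · rw [if_pos hc, if_pos (key.mp hc)]
  · rw [if_neg hc, if_neg (fun hk => hc (key.mpr hk))]
end

section
/- Let F be a field, n ≥ 2, N ≥ 1, and let ζ_i(t) = Σ_{k=1}^N γ_{ik} t^{−k} with γ_{ik} ∈ F for i = 1,…,n−1. Suppose that for each j ∈ {1,…,n} there is a vector of polynomials x^j = (x^j_1,…,x^j_n), each x^j_i ∈ F[t] of degree at most N, such that: (a) for each i = 1,…,n−1, the Laurent polynomial ζ_i(t)·x^j_n(t) − x̃^j_i(t) has only nonnegative powers of t; (b) the Laurent polynomial Σ_{i=1}^{n−1} ζ_i(t)·x^j_i(t) + x̃^j_n(t) has only nonnegative powers of t; and (c) x^j_i(1) = δ_{ij} for all i. Define the n×n matrix U(t) whose (i,j)-entry is x^j_i(t) for i = 1,…,n−1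 and whose (n,j)-entry is t^N·x̃^j_n(t). Then U is paraunitary, i.e., U(t)·Ũ(t) = I_n, and every entry of G(t)·diag(1,1,…,1,t^{−N})·U(t) has only nonnegative powers of t. -/
open LaurentPolynomial Matrix Finset

section Stmt10Aux

variable {F : Type*} [Field F]

lemma onn_add' {p q : F[T;T⁻¹]} (hp : OnlyNonnegPowers p) (hq : OnlyNonnegPowers q) :
    OnlyNonnegPowers (p + q) := fun m hm => by
  rw [AddMonoidAlgebra.coeff_add, Finsupp.add_apply, hp m hm, hq m hm, add_zero]

lemma onn_sub' {p q : F[T;T⁻¹]} (hp : OnlyNonnegPowers p) (hq : OnlyNonnegPowers q) :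
    OnlyNonnegPowers (p - q) := fun m hm => by
  rw [AddMonoidAlgebra.coeff_sub, Finsupp.sub_apply, hp m hm, hq m hm, sub_zero]

lemma onn_mul' {p q : F[T;T⁻¹]} (hp : OnlyNonnegPowers p) (hq : OnlyNonnegPowers q) :
    OnlyNonnegPowers (p * q) := by
  intro m hm
  by_contra h
  have hmem : m ∈ (p * q).coeff.support := Finsupp.mem_support_iff.mpr h
  have h2 := AddMonoidAlgebra.support_coeff_mul_subset p q hmem
  rw [Finset.mem_add] at h2
  obtain ⟨u, hu, v, hv, huv⟩ := h2
  have hu0 : (0:ℤ) ≤ u := le_of_not_gt fun hc => (Finsupp.mem_support_iff.mp hu) (hp u hc)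
  have hv0 : (0:ℤ) ≤ v := le_of_not_gt fun hc => (Finsupp.mem_support_iff.mp hv) (hq v hc)
  omega

lemma onn_sum' {ι : Type*} (s : Finset ι) (f : ι → F[T;T⁻¹])
    (h : ∀ i ∈ s, OnlyNonnegPowers (f i)) : OnlyNonnegPowers (∑ i ∈ s, f i) := by
  intro m hm
  rw [AddMonoidAlgebra.coeff_sum, Finsupp.finset_sum_apply]
  exact Finset.sum_eq_zero fun i hi => h i hi m hm

lemma onn_CT' (c : F) (k : ℕ) :
    OnlyNonnegPowers (LaurentPolynomial.C c * LaurentPolynomial.T (k : ℤ)) := by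
  intro m hm
  rw [← single_eq_C_mul_T]
  rw [AddMonoidAlgebra.coeff_single, Finsupp.single_apply, if_neg (by omega)]

lemma eq_C_of' (p : F[T;T⁻¹]) (h : ∀ m : ℤ, m ≠ 0 → p.coeff m = 0) :
    p = LaurentPolynomial.C (p.coeff 0) := by
  ext m
  rcases eq_or_ne m 0 with rfl | hm
  · rw [← single_eq_C, AddMonoidAlgebra.coeff_single, Finsupp.single_apply, if_pos rfl]
  · rw [h m hm, ← single_eq_C, AddMonoidAlgebra.coeff_single, Finsupp.single_apply, if_neg (Ne.symm hm)]

/-- `xPol N c = ∑_{k=0}^N c_k t^k`. -/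
noncomputable def xPol (N : ℕ) (c : Fin (N + 1) → F) : F[T;T⁻¹] :=
  ∑ k : Fin (N + 1), LaurentPolynomial.C (c k) * LaurentPolynomial.T (k : ℤ)

/-- `xNeg N c = ∑_{k=0}^N c_k t^{-k}`. -/
noncomputable def xNeg (N : ℕ) (c : Fin (N + 1) → F) : F[T;T⁻¹] :=
  ∑ k : Fin (N + 1), LaurentPolynomial.C (c k) * LaurentPolynomial.T (-(k : ℤ))

lemma onn_xPol (N : ℕ) (c : Fin (N + 1) → F) : OnlyNonnegPowers (xPol N c) :=
  onn_sum' _ _ fun k _ => onn_CT' (c k) (k : ℕ)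

lemma invert_xPol (N : ℕ) (c : Fin (N + 1) → F) :
    LaurentPolynomial.invert (xPol N c) = xNeg N c := by
  unfold xPol xNeg
  rw [map_sum]
  exact Finset.sum_congr rfl fun k _ => by rw [_root_.map_mul, invert_C, invert_T]

lemma invert_xNeg (N : ℕ) (c : Fin (N + 1) → F) :
    LaurentPolynomial.invert (xNeg N c) = xPol N c := by
  unfold xPol xNeg
  rw [map_sum]
  refine Finset.sum_congr rfl fun k _ => ?_
  rw [_root_.map_mul, invert_C, invert_T, neg_neg]

/-- Evaluation at `t = 1` as an algebra homomorphism. -/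
noncomputable def epsLP (F : Type*) [Field F] : F[T;T⁻¹] →ₐ[F] F :=
  AddMonoidAlgebra.lift F F ℤ 1

lemma epsLP_single (m : ℤ) (b : F) : epsLP F (AddMonoidAlgebra.single m b) = b := by
  show (AddMonoidAlgebra.lift F F ℤ 1) (AddMonoidAlgebra.single m b) = b
  rw [AddMonoidAlgebra.lift_single]; simp

lemma epsLP_CT (c : F) (k : ℤ) :
    epsLP F (LaurentPolynomial.C c * LaurentPolynomial.T k) = c := by
  rw [← single_eq_C_mul_T]; exact epsLP_single k c

lemma epsLP_C (c : F) : epsLP F (LaurentPolynomial.C c) = c := by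
  rw [← single_eq_C]; exact epsLP_single 0 c

lemma epsLP_xPol (N : ℕ) (c : Fin (N + 1) → F) :
    epsLP F (xPol N c) = ∑ k : Fin (N + 1), c k := by
  unfold xPol
  rw [map_sum]
  exact Finset.sum_congr rfl fun k _ => epsLP_CT (c k) (k : ℤ)

lemma epsLP_xNeg (N : ℕ) (c : Fin (N + 1) → F) :
    epsLP F (xNeg N c) = ∑ k : Fin (N + 1), c k := by
  unfold xNeg
  rw [map_sum]
  exact Finset.sum_congr rfl fun k _ => epsLP_CT (c k) (-(k : ℤ))

/-- The `(j, j')` entry of `Ũ U`. -/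
noncomputable def entE {F : Type*} [Field F] (n N : ℕ) (hn : 2 ≤ n)
    (a : Fin n → Fin n → Fin (N + 1) → F) (j j' : Fin n) : F[T;T⁻¹] :=
  (∑ i ∈ Finset.univ.filter (fun i : Fin n => i.val < n - 1), xNeg N (a j i) * xPol N (a j' i))
    + xPol N (a j ⟨n - 1, by omega⟩) * xNeg N (a j' ⟨n - 1, by omega⟩)

lemma invert_entE (n N : ℕ) (hn : 2 ≤ n) (a : Fin n → Fin n → Fin (N + 1) → F) (j j' : Fin n) :
    LaurentPolynomial.invert (entE n N hn a j j') = entE n N hn a j' j := by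
  unfold entE
  rw [map_add, map_sum, _root_.map_mul, invert_xPol, invert_xNeg]
  congr 1
  · exact Finset.sum_congr rfl fun i _ => by rw [_root_.map_mul, invert_xNeg, invert_xPol, mul_comm]
  · exact mul_comm _ _

end Stmt10Aux

set_option maxHeartbeats 1000000 in
theorem stmt10 (F : Type*) [Field F] (n N : ℕ) (hn : 2 ≤ n) (hN : 1 ≤ N)
    (γ : ℕ → ℕ → F)
    -- `a j i` is the coefficient list of the polynomial `x^j_i` of degree ≤ N,
    -- `x^j_i(t) = ∑_{k=0}^N (a j i k) t^k`.
    (a : Fin n → Fin n → Fin (N + 1) → F)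
    -- condition (a): for each `i = 1, …, n-1`, `ζ_i(t)·x^j_n(t) − x̃^j_i(t)` has only
    -- nonnegative powers of `t`
    (hA : ∀ j : Fin n, ∀ i : Fin n, i.val < n - 1 →
      OnlyNonnegPowers (zetaPoly N (γ (i.val + 1)) *
        (∑ k : Fin (N + 1), LaurentPolynomial.C (a j ⟨n - 1, by omega⟩ k) *
          LaurentPolynomial.T (k : ℤ)) -
        (∑ k : Fin (N + 1), LaurentPolynomial.C (a j i k) *
          LaurentPolynomial.T (-(k : ℤ)))))
    -- condition (b): `∑_{i=1}^{n-1} ζ_i(t)·x^j_i(t) + x̃^j_n(t)` has only nonnegative powers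
    (hB : ∀ j : Fin n,
      OnlyNonnegPowers ((∑ i ∈ Finset.univ.filter (fun i : Fin n => i.val < n - 1),
        zetaPoly N (γ (i.val + 1)) *
          (∑ k : Fin (N + 1), LaurentPolynomial.C (a j i k) *
            LaurentPolynomial.T (k : ℤ))) +
        (∑ k : Fin (N + 1), LaurentPolynomial.C (a j ⟨n - 1, by omega⟩ k) *
          LaurentPolynomial.T (-(k : ℤ)))))
    -- condition (c): `x^j_i(1) = δ_{i j}`
    (hC : ∀ j i : Fin n, (∑ k : Fin (N + 1), a j i k) = if i = j then 1 else 0)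
    -- `U(t)`: its `(i,j)`-entry is `x^j_i(t)` for `i = 1, …, n-1` and its `(n,j)`-entry is
    -- `t^N · x̃^j_n(t)`
    (Umat : Matrix (Fin n) (Fin n) F[T;T⁻¹])
    (hUmat : ∀ i j : Fin n, Umat i j =
      if i.val = n - 1 then
        LaurentPolynomial.T (N : ℤ) *
          (∑ k : Fin (N + 1), LaurentPolynomial.C (a j ⟨n - 1, by omega⟩ k) *
            LaurentPolynomial.T (-(k : ℤ)))
      else
        (∑ k : Fin (N + 1), LaurentPolynomial.C (a j i k) * LaurentPolynomial.T (k : ℤ))) :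
    Paraunitary Umat ∧
    ∀ i j : Fin n, OnlyNonnegPowers
      (((Gmat n N γ * diagTN F n N * Umat : Matrix (Fin n) (Fin n) F[T;T⁻¹])) i j) := by
  classical
  have hn1 : n - 1 < n := by omega
  have hTT : (LaurentPolynomial.T (-(N:ℤ)) * LaurentPolynomial.T (N:ℤ) : F[T;T⁻¹]) = 1 := by
    rw [← T_add, neg_add_cancel, T_zero]
  have hfilt_not : Finset.univ.filter (fun i : Fin n => ¬ i.val < n - 1)
      = {(⟨n - 1, hn1⟩ : Fin n)} := by
    ext m
    have := m.isLt
    simp only [Finset.mem_filter, Finset.mem_univ, true_and, Finset.mem_singleton, Fin.ext_iff]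
    omega
  have hfull : ∀ f : Fin n → F,
      (∑ i ∈ Finset.univ.filter (fun i : Fin n => i.val < n - 1), f i) + f ⟨n - 1, hn1⟩
        = ∑ i : Fin n, f i := by
    intro f
    rw [← Finset.sum_filter_add_sum_filter_not Finset.univ (fun i : Fin n => i.val < n - 1) f,
      hfilt_not, Finset.sum_singleton]
  have hUlt : ∀ (i j : Fin n), i.val < n - 1 → Umat i j = xPol N (a j i) := by
    intro i j hi
    rw [hUmat i j, if_neg (by omega)]
    rfl
  have hUlast : ∀ j : Fin n,
      Umat ⟨n - 1, hn1⟩ j = LaurentPolynomial.T (N : ℤ) * xNeg N (a j ⟨n - 1, hn1⟩) := by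
    intro j
    rw [hUmat ⟨n - 1, hn1⟩ j, if_pos rfl]
    rfl
  -- key formula for the entries of `Ũ U`
  have key : ∀ j j' : Fin n, (tildeMat Umat * Umat) j j' = entE n N hn a j j' := by
    intro j j'
    have h0 : (tildeMat Umat * Umat) j j'
        = ∑ i : Fin n, LaurentPolynomial.invert (Umat i j) * Umat i j' := by
      rw [Matrix.mul_apply]; rfl
    rw [h0, ← Finset.sum_filter_add_sum_filter_not Finset.univ (fun i : Fin n => i.val < n - 1),
      hfilt_not, Finset.sum_singleton]
    unfold entE
    congr 1
    · refine Finset.sum_congr rfl fun i hi => ?_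
      have hi' : i.val < n - 1 := (Finset.mem_filter.mp hi).2
      rw [hUlt i j hi', hUlt i j' hi', invert_xPol]
    · rw [hUlast j, hUlast j', _root_.map_mul, invert_T, invert_xNeg, mul_mul_mul_comm, hTT, one_mul]
  -- the entries of `Ũ U` have only nonnegative powers
  have honn : ∀ j j' : Fin n, OnlyNonnegPowers (entE n N hn a j j') := by
    intro j j'
    have e1 : (∑ i ∈ Finset.univ.filter (fun i : Fin n => i.val < n - 1),
          xNeg N (a j i) * xPol N (a j' i))
        = (∑ i ∈ Finset.univ.filter (fun i : Fin n => i.val < n - 1),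
            (zetaPoly N (γ (i.val + 1)) * xPol N (a j ⟨n - 1, hn1⟩)) * xPol N (a j' i))
          - ∑ i ∈ Finset.univ.filter (fun i : Fin n => i.val < n - 1),
            (zetaPoly N (γ (i.val + 1)) * xPol N (a j ⟨n - 1, hn1⟩) - xNeg N (a j i))
              * xPol N (a j' i) := by
      rw [← Finset.sum_sub_distrib]
      exact Finset.sum_congr rfl fun i _ => by ring
    have e2 : xPol N (a j ⟨n - 1, hn1⟩) *
        ((∑ i ∈ Finset.univ.filter (fun i : Fin n => i.val < n - 1),
            zetaPoly N (γ (i.val + 1)) * xPol N (a j' i)) + xNeg N (a j' ⟨n - 1, hn1⟩))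
        = (∑ i ∈ Finset.univ.filter (fun i : Fin n => i.val < n - 1),
            (zetaPoly N (γ (i.val + 1)) * xPol N (a j ⟨n - 1, hn1⟩)) * xPol N (a j' i))
          + xPol N (a j ⟨n - 1, hn1⟩) * xNeg N (a j' ⟨n - 1, hn1⟩) := by
      rw [mul_add, Finset.mul_sum]
      refine congrArg (· + xPol N (a j ⟨n - 1, hn1⟩) * xNeg N (a j' ⟨n - 1, hn1⟩)) ?_
      exact Finset.sum_congr rfl fun i _ => by ring
    have e3 : entE n N hn a j j'
        = xPol N (a j ⟨n - 1, hn1⟩) *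
            ((∑ i ∈ Finset.univ.filter (fun i : Fin n => i.val < n - 1),
              zetaPoly N (γ (i.val + 1)) * xPol N (a j' i)) + xNeg N (a j' ⟨n - 1, hn1⟩))
          - ∑ i ∈ Finset.univ.filter (fun i : Fin n => i.val < n - 1),
            (zetaPoly N (γ (i.val + 1)) * xPol N (a j ⟨n - 1, hn1⟩) - xNeg N (a j i))
              * xPol N (a j' i) := by
      show (∑ i ∈ Finset.univ.filter (fun i : Fin n => i.val < n - 1),
          xNeg N (a j i) * xPol N (a j' i))
        + xPol N (a j ⟨n - 1, hn1⟩) * xNeg N (a j' ⟨n - 1, hn1⟩) = _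
      rw [e1, e2]
      ring
    rw [e3]
    exact onn_sub' (onn_mul' (onn_xPol N _) (hB j'))
      (onn_sum' _ _ fun i hi =>
        onn_mul' (hA j i (Finset.mem_filter.mp hi).2) (onn_xPol N _))
  -- the entries of `Ũ U` are constants
  have hzero : ∀ j j' : Fin n, ∀ m : ℤ, m ≠ 0 → (entE n N hn a j j').coeff m = 0 := by
    intro j j' m hm
    rcases lt_or_gt_of_ne hm with h | h
    · exact honn j j' m h
    · have h3 : (entE n N hn a j j').coeff m = (entE n N hn a j' j).coeff (-m) := by
        rw [← invert_entE n N hn a j' j]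
        rw [invert_apply]
      rw [h3]
      exact honn j' j (-m) (by omega)
  -- evaluation at `t = 1`
  have heval : ∀ j j' : Fin n, epsLP F (entE n N hn a j j') = if j = j' then 1 else 0 := by
    intro j j'
    have step1 : epsLP F (entE n N hn a j j')
        = (∑ i ∈ Finset.univ.filter (fun i : Fin n => i.val < n - 1),
            (if i = j then (1:F) else 0) * (if i = j' then (1:F) else 0))
          + (if (⟨n - 1, hn1⟩ : Fin n) = j then (1:F) else 0)
            * (if (⟨n - 1, hn1⟩ : Fin n) = j' then (1:F) else 0) := by
      unfold entE
      simp only [map_add, map_sum, _root_.map_mul, epsLP_xPol, epsLP_xNeg, hC]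
    have final : (∑ i : Fin n, (if i = j then (1:F) else 0) * (if i = j' then (1:F) else 0))
        = if j = j' then 1 else 0 := by
      rcases eq_or_ne j j' with rfl | hne
      · rw [if_pos rfl, Finset.sum_eq_single j]
        · rw [if_pos rfl, one_mul]
        · intro b _ hb
          rw [if_neg hb, zero_mul]
        · intro h
          exact absurd (Finset.mem_univ j) h
      · rw [if_neg hne]
        apply Finset.sum_eq_zero
        intro b _
        rcases eq_or_ne b j with rfl | hbj
        · rw [if_neg hne, mul_zero]
        · rw [if_neg hbj, zero_mul]
    rw [step1]
    exact (hfull fun i => (if i = j then (1:F) else 0) * (if i = j' then (1:F) else 0)).trans final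
  -- `Ũ U = 1`
  have hUtU : tildeMat Umat * Umat = 1 := by
    refine Matrix.ext fun j j' => ?_
    have h0 : (entE n N hn a j j').coeff 0 = if j = j' then 1 else 0 := by
      have hc := eq_C_of' (entE n N hn a j j') (hzero j j')
      have he := heval j j'
      rw [hc, epsLP_C] at he
      exact he
    rw [key j j', Matrix.one_apply, eq_C_of' (entE n N hn a j j') (hzero j j'), h0]
    split_ifs
    · exact map_one LaurentPolynomial.C
    · exact map_zero LaurentPolynomial.C
  constructor
  · exact mul_eq_one_comm.mp hUtU
  · intro i j
    have hprod : (Gmat n N γ * diagTN F n N * Umat) i j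
        = ∑ m : Fin n, Gmat n N γ i m *
            ((if m.val = n - 1 then LaurentPolynomial.T (-(N:ℤ)) else 1) * Umat m j) := by
      rw [Matrix.mul_apply]
      refine Finset.sum_congr rfl fun m _ => ?_
      rw [show (Gmat n N γ * diagTN F n N) i m
          = Gmat n N γ i m * (if m.val = n - 1 then LaurentPolynomial.T (-(N:ℤ)) else 1) from
        Matrix.mul_diagonal _ _ i m, mul_assoc]
    by_cases hi : i.val = n - 1
    · -- last row
      have hsum : (∑ m : Fin n, Gmat n N γ i m *
            ((if m.val = n - 1 then LaurentPolynomial.T (-(N:ℤ)) else 1) * Umat m j))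
          = (∑ m ∈ Finset.univ.filter (fun m : Fin n => m.val < n - 1),
              zetaPoly N (γ (m.val + 1)) * xPol N (a j m)) + xNeg N (a j ⟨n - 1, hn1⟩) := by
        rw [← Finset.sum_filter_add_sum_filter_not Finset.univ (fun m : Fin n => m.val < n - 1),
          hfilt_not, Finset.sum_singleton]
        congr 1
        · refine Finset.sum_congr rfl fun m hm => ?_
          have hm' : m.val < n - 1 := (Finset.mem_filter.mp hm).2
          have hG : Gmat n N γ i m = zetaPoly N (γ (m.val + 1)) := by
            simp [Gmat, hi, show ¬ (m : ℕ) = n - 1 by omega]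
          have hd : (if (m : ℕ) = n - 1 then (LaurentPolynomial.T (-(N:ℤ)) : F[T;T⁻¹]) else 1)
              = 1 := if_neg (by omega)
          rw [hG, hd, one_mul, hUlt m j hm']
        · have hG1 : Gmat n N γ i ⟨n - 1, hn1⟩ = 1 := by simp [Gmat, hi]
          have hd : (if ((⟨n - 1, hn1⟩ : Fin n) : ℕ) = n - 1
                then (LaurentPolynomial.T (-(N:ℤ)) : F[T;T⁻¹]) else 1)
              = LaurentPolynomial.T (-(N:ℤ)) := if_pos rfl
          rw [hG1, one_mul, hd, hUlast j, ← mul_assoc, hTT, one_mul]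
      rw [hprod, hsum]
      exact hB j
    · -- other rows
      have hsum : (∑ m : Fin n, Gmat n N γ i m *
            ((if m.val = n - 1 then LaurentPolynomial.T (-(N:ℤ)) else 1) * Umat m j))
          = xPol N (a j i) := by
        rw [Finset.sum_eq_single i]
        · have hGii : Gmat n N γ i i = 1 := by simp [Gmat, hi]
          rw [hGii, one_mul, if_neg hi, one_mul, hUlt i j (by have := i.isLt; omega)]
        · intro b _ hb
          have hG0 : Gmat n N γ i b = 0 := by
            simp [Gmat, hi, show ¬ i = b from fun h => hb h.symm]
          rw [hG0, zero_mul]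
        · intro h
          exact absurd (Finset.mem_univ i) h
      rw [hprod, hsum]
      exact onn_xPol N _
end
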